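/- For all integers n, m ≥ 2, the complete bipartite graph K_{n,m} satisfies χ_{vi,1}(K_{n,m}) = n + m. -/
import Mathlib


open SimpleGraph

variable {V : Type*}

/-- An *incidence* of `G`: a pair `(v, e)` where `e` is an edge of `G` and `v ∈ e`. -/
abbrev Inc (G : SimpleGraph V) : Type _ :=
  {p : V × Sym2 V // p.2 ∈ G.edgeSet ∧ p.1 ∈ p.2}

/-- The elements to be colored in a vi-simultaneous coloring: vertices together with
incidences. -/
abbrev VIElem (G : SimpleGraph V) : Type _ := V ⊕ Inc G

/-- Adjacency between elements of `V(G) ∪ I(G)`: two vertices are adjacent when they are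
adjacent in `G`; a vertex `u` and an incidence `(w, f)` are adjacent when `u ∈ f`; two
distinct incidences `(v, e)`, `(w, f)` are adjacent when `v = w`, or `e = f`, or
`{v, w} = e`, or `{v, w} = f`. -/
def VIAdj (G : SimpleGraph V) : VIElem G → VIElem G → Prop
  | Sum.inl u, Sum.inl w => G.Adj u w
  | Sum.inl u, Sum.inr i => u ∈ i.1.2
  | Sum.inr i, Sum.inl u => u ∈ i.1.2
  | Sum.inr i, Sum.inr j => i ≠ j ∧
      (i.1.1 = j.1.1 ∨ i.1.2 = j.1.2 ∨ s(i.1.1, j.1.1) = i.1.2 ∨ s(i.1.1, j.1.1) = j.1.2)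

/-- A vi-simultaneous proper `k`-coloring of `G`: adjacent or incident elements of
`V(G) ∪ I(G)` receive distinct colors. -/
def IsVIColoring (G : SimpleGraph V) {k : ℕ} (c : VIElem G → Fin k) : Prop :=
  ∀ a b, VIAdj G a b → c a ≠ c b

/-- The vi-simultaneous chromatic number `χ_vi(G)`: the least `k` admitting a
vi-simultaneous proper `k`-coloring. -/
noncomputable def chiVI (G : SimpleGraph V) : ℕ :=
  sInf {k | ∃ c : VIElem G → Fin k, IsVIColoring G c}

/-- `I₂(v)`: the set of second incidences of a vertex `v`, i.e. incidences `(u, e)` with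
`e = {u, v}` and `u ≠ v`. -/
def I2 (G : SimpleGraph V) (v : V) : Set (Inc G) :=
  {i | i.1.1 ≠ v ∧ i.1.2 = s(i.1.1, v)}

/-- A vi-simultaneous `(k, s)`-coloring: a vi-simultaneous proper `k`-coloring in which at
most `s` distinct colors appear on `I₂(v)` for every vertex `v`. -/
def IsVISColoring (G : SimpleGraph V) (s : ℕ) {k : ℕ} (c : VIElem G → Fin k) : Prop :=
  IsVIColoring G c ∧ ∀ v : V, ((fun i => c (Sum.inr i)) '' I2 G v).ncard ≤ s

/-- `χ_{vi,s}(G)`: the least `k` admitting a vi-simultaneous `(k, s)`-coloring. -/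
noncomputable def chiVIS (G : SimpleGraph V) (s : ℕ) : ℕ :=
  sInf {k | ∃ c : VIElem G → Fin k, IsVISColoring G s c}

/-- The maximum degree `Δ(G)` of a finite graph. -/
noncomputable def maxDeg [Fintype V] (G : SimpleGraph V) : ℕ :=
  Finset.univ.sup fun v => (G.neighborSet v).ncard

namespace Scratch
variable {n m : ℕ}

abbrev GG (n m : ℕ) := completeBipartiteGraph (Fin n) (Fin m)

noncomputable def oE (p : Inc (GG n m)) : Fin n ⊕ Fin m := Sym2.Mem.other' p.2.2

lemma oE_spec (p : Inc (GG n m)) : s(p.1.1, oE p) = p.1.2 := Sym2.other_spec' p.2.2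

lemma oE_adj (p : Inc (GG n m)) : (GG n m).Adj p.1.1 (oE p) := by
  rw [← SimpleGraph.mem_edgeSet, oE_spec]; exact p.2.1

lemma oE_ne (p : Inc (GG n m)) : oE p ≠ p.1.1 := (oE_adj p).ne'

lemma adj_isLeft {u v : Fin n ⊕ Fin m} (h : (GG n m).Adj u v) : u.isLeft ≠ v.isLeft := by
  rcases h with ⟨h1, h2⟩ | ⟨h1, h2⟩ <;> cases u <;> cases v <;> simp_all

def nxtF {k : ℕ} (i : Fin k) : Fin k := ⟨(i.val + 1) % k, Nat.mod_lt _ i.pos⟩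

def nxt : Fin n ⊕ Fin m → Fin n ⊕ Fin m := Sum.map nxtF nxtF

lemma nxt_isLeft (v : Fin n ⊕ Fin m) : (nxt v).isLeft = v.isLeft := by
  cases v <;> simp [nxt]

lemma nxtF_ne {k : ℕ} (hk : 2 ≤ k) (i : Fin k) : nxtF i ≠ i := by
  intro h
  have h' : (i.val + 1) % k = i.val := congrArg Fin.val h
  have hlt := i.isLt
  rcases Nat.lt_or_ge (i.val + 1) k with hc | hc
  · rw [Nat.mod_eq_of_lt hc] at h'; omega
  · have he : i.val + 1 = k := by omega
    rw [he, Nat.mod_self] at h'; omega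

lemma nxt_ne (hn : 2 ≤ n) (hm : 2 ≤ m) (v : Fin n ⊕ Fin m) : nxt v ≠ v := by
  cases v with
  | inl i => simpa [nxt] using nxtF_ne hn i
  | inr j => simpa [nxt] using nxtF_ne hm j

noncomputable def col : VIElem (GG n m) → Fin (n + m)
  | Sum.inl v => finSumFinEquiv (nxt v)
  | Sum.inr p => finSumFinEquiv (oE p)

/-- if `p ∈ I2 v` then the other end is `v`. -/
lemma oE_of_mem_I2 {v : Fin n ⊕ Fin m} {p : Inc (GG n m)} (h : p ∈ I2 (GG n m) v) :
    oE p = v := by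
  obtain ⟨h1, h2⟩ := h
  have := oE_spec p
  rw [h2, Sym2.eq_iff] at this
  rcases this with ⟨-, h⟩ | ⟨h, -⟩
  · exact h
  · exact absurd h h1

lemma col_isVIS (hn : 2 ≤ n) (hm : 2 ≤ m) : IsVISColoring (GG n m) 1 (col (n := n) (m := m)) := by
  constructor
  · rintro (u | p) (w | q) hadj
    · -- vertex-vertex
      simp only [col, ne_eq, EmbeddingLike.apply_eq_iff_eq]
      intro h
      exact adj_isLeft hadj (by rw [← nxt_isLeft u, ← nxt_isLeft w, h])
    · -- vertex-incidence
      simp only [col, ne_eq, EmbeddingLike.apply_eq_iff_eq]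
      intro h
      have hu : u ∈ q.1.2 := hadj
      rw [← oE_spec q, Sym2.mem_iff] at hu
      rcases hu with rfl | rfl
      · exact adj_isLeft (oE_adj q) (by rw [← h, nxt_isLeft])
      · exact nxt_ne hn hm _ h
    · -- incidence-vertex
      simp only [col, ne_eq, EmbeddingLike.apply_eq_iff_eq]
      intro h
      have hu : w ∈ p.1.2 := hadj
      rw [← oE_spec p, Sym2.mem_iff] at hu
      rcases hu with rfl | rfl
      · exact adj_isLeft (oE_adj p) (by rw [h, nxt_isLeft])
      · exact nxt_ne hn hm _ h.symm
    · -- incidence-incidence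
      simp only [col, ne_eq, EmbeddingLike.apply_eq_iff_eq]
      intro h
      obtain ⟨hne, hcase⟩ := hadj
      set v := oE q with hv
      have hp2 : p.1.2 = s(p.1.1, v) := by rw [← oE_spec p, h]
      have hq2 : q.1.2 = s(q.1.1, v) := by rw [← oE_spec q]
      have hp1 : p.1.1 ≠ v := fun hh => oE_ne p (h.trans hh.symm)
      have hq1 : q.1.1 ≠ v := fun hh => oE_ne q hh.symm
      rcases hcase with h1 | h1 | h1 | h1
      · exact hne (Subtype.ext (Prod.ext h1 (by rw [hp2, hq2, h1])))
      · rw [hp2, hq2, Sym2.eq_iff] at h1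
        rcases h1 with ⟨h1, -⟩ | ⟨h1, -⟩
        · exact hne (Subtype.ext (Prod.ext h1 (by rw [hp2, hq2, h1])))
        · exact hp1 h1
      · rw [hp2, Sym2.eq_iff] at h1
        rcases h1 with ⟨-, h1⟩ | ⟨h1, -⟩
        · exact hq1 h1
        · exact hp1 h1
      · rw [hq2, Sym2.eq_iff] at h1
        rcases h1 with ⟨-, h1⟩ | ⟨h1, -⟩
        · exact hq1 h1
        · exact hp1 h1
  · intro v
    have : (fun i => col (Sum.inr i)) '' I2 (GG n m) v ⊆ {finSumFinEquiv v} := by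
      rintro x ⟨p, hp, rfl⟩
      simp [col, oE_of_mem_I2 hp]
    calc ((fun i => col (Sum.inr i)) '' I2 (GG n m) v).ncard
        ≤ ({finSumFinEquiv v} : Set (Fin (n+m))).ncard := Set.ncard_le_ncard this (Set.toFinite _)
      _ = 1 := Set.ncard_singleton _

lemma lower (hn : 2 ≤ n) (hm : 2 ≤ m) {k : ℕ} (c : VIElem (GG n m) → Fin k)
    (hc : IsVISColoring (GG n m) 1 c) : n + m ≤ k := by
  -- canonical neighbor
  set nb : Fin n ⊕ Fin m → Fin n ⊕ Fin m :=
    Sum.elim (fun _ => Sum.inr (⟨0, by omega⟩ : Fin m)) (fun _ => Sum.inl (⟨0, by omega⟩ : Fin n))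
    with hnbdef
  have hnb : ∀ v, (GG n m).Adj (nb v) v := by rintro (i | j) <;> simp [hnbdef]
  set incv : (Fin n ⊕ Fin m) → Inc (GG n m) :=
    fun v => ⟨(nb v, s(nb v, v)), ⟨(hnb v), Sym2.mem_mk_left _ _⟩⟩ with hincv
  set g : (Fin n ⊕ Fin m) → Fin k := fun v => c (Sum.inr (incv v)) with hg
  have hsub : ∀ v (p q : Inc (GG n m)), p ∈ I2 (GG n m) v → q ∈ I2 (GG n m) v →
      c (Sum.inr p) = c (Sum.inr q) := by
    intro v p q hp hq
    have h1 := hc.2 v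
    rw [Set.ncard_le_one_iff (Set.toFinite _)] at h1
    exact h1 ⟨p, hp, rfl⟩ ⟨q, hq, rfl⟩
  have hincvI2 : ∀ v, incv v ∈ I2 (GG n m) v := fun v => ⟨(hnb v).ne, rfl⟩
  -- adjacent vertices get different g-values
  have claimA : ∀ u v, (GG n m).Adj u v → g u ≠ g v := by
    intro u v huv hgeq
    set pu : Inc (GG n m) := ⟨(v, s(v, u)), ⟨huv.symm, Sym2.mem_mk_left _ _⟩⟩ with hpu
    set pv : Inc (GG n m) := ⟨(u, s(u, v)), ⟨huv, Sym2.mem_mk_left _ _⟩⟩ with hpv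
    have hgu : g u = c (Sum.inr pu) := hsub u _ _ (hincvI2 u) ⟨huv.ne', rfl⟩
    have hgv : g v = c (Sum.inr pv) := hsub v _ _ (hincvI2 v) ⟨huv.ne, rfl⟩
    have hadj : VIAdj (GG n m) (Sum.inr pu) (Sum.inr pv) := by
      refine ⟨?_, Or.inr (Or.inl Sym2.eq_swap)⟩
      intro hh
      exact huv.ne' (congrArg (fun p : Inc (GG n m) => p.1.1) hh)
    exact hc.1 _ _ hadj (hgu ▸ hgv ▸ hgeq)
  -- same-side vertices get different g-values
  have claimB : ∀ u v, u ≠ v → nb u = nb v → g u ≠ g v := by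
    intro u v hne hnbeq hgeq
    have hpq : incv u ≠ incv v := by
      intro hh
      have h2 : s(nb u, u) = s(nb v, v) :=
        congrArg (fun p : Inc (GG n m) => p.1.2) hh
      rw [← hnbeq, Sym2.eq_iff] at h2
      rcases h2 with ⟨-, h2⟩ | ⟨-, h2⟩
      · exact hne h2
      · exact (hnb u).ne' h2
    have hadj : VIAdj (GG n m) (Sum.inr (incv u)) (Sum.inr (incv v)) :=
      ⟨hpq, Or.inl hnbeq⟩
    exact hc.1 _ _ hadj hgeq
  have ginj : Function.Injective g := by
    intro u v hgeq
    by_contra hne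
    rcases u with i | j <;> rcases v with i' | j'
    · exact claimB _ _ hne rfl hgeq
    · exact claimA _ _ (by simp) hgeq
    · exact claimA _ _ (by simp) hgeq
    · exact claimB _ _ hne rfl hgeq
  have := Fintype.card_le_of_injective g ginj
  simpa using this

end Scratch

/-- For all integers `n, m ≥ 2`, the complete bipartite graph `K_{n,m}`
satisfies `χ_{vi,1}(K_{n,m}) = n + m`. -/
theorem chiVIS_one_completeBipartite (n m : ℕ) (hn : 2 ≤ n) (hm : 2 ≤ m) :
    chiVIS (completeBipartiteGraph (Fin n) (Fin m)) 1 = n + m := by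
  have hmem : (n + m) ∈ {k | ∃ c : VIElem (Scratch.GG n m) → Fin k,
      IsVISColoring (Scratch.GG n m) 1 c} := ⟨Scratch.col, Scratch.col_isVIS hn hm⟩
  rw [chiVIS]
  apply le_antisymm
  · exact Nat.sInf_le hmem
  · have hinf := Nat.sInf_mem (⟨n + m, hmem⟩ : Set.Nonempty _)
    obtain ⟨c, hc⟩ := hinf
    exact Scratch.lower hn hm c hc
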